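/- Let G ∈ 𝒢_n^m with strong-component vertex set S, within-S outdegrees d*(s), and 0 ≤ α < 1. Then E_α(G) ≥ α²·Σ_{s∈S}(d*(s))² + α²(n−m) + (1−α)²·c₂(G*). Moreover, if 0 < α < 1, equality holds if and only if each hung tree is an in-tree with root s: within every fiber r⁻¹(s), the vertex s has outdegree 0 inside the fiber and every other vertex of the fiber has outdegree exactly 1 inside the fiber. -/

import Mathlib

open Polynomial Matrix Finset

/-- The outdegree of a vertex `v` of the digraph with adjacency matrix `A`. -/
noncomputable def outdeg {V : Type*} [Fintype V] (A : Matrix V V ℝ) (v : V) : ℝ := ∑ w, A v w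

/-- The `A_α`-matrix `α·D⁺ + (1-α)·A` of a digraph with adjacency matrix `A`. -/
noncomputable def Aalpha {V : Type*} [Fintype V] [DecidableEq V] (α : ℝ) (A : Matrix V V ℝ) :
    Matrix V V ℝ :=
  α • Matrix.diagonal (outdeg A) + (1 - α) • A

/-- The spectral radius of a real square matrix: the maximum modulus of its complex
eigenvalues (roots of the characteristic polynomial over `ℂ`). -/
noncomputable def specRad {V : Type*} [Fintype V] [DecidableEq V] (M : Matrix V V ℝ) : ℝ :=
  sSup {x : ℝ | ∃ z : ℂ, (M.map ((↑) : ℝ → ℂ)).charpoly.IsRoot z ∧ ‖z‖ = x}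

/-- The `A_α` energy of a digraph: the sum of the squares of the eigenvalues of its
`A_α`-matrix, equivalently `trace (A_α(G)²)`. -/
noncomputable def Ealpha {V : Type*} [Fintype V] [DecidableEq V] (α : ℝ) (A : Matrix V V ℝ) : ℝ :=
  Matrix.trace (Aalpha α A * Aalpha α A)

/-- The outdegree of `s` within the vertex set `S` (the within-`S` outdegree `d*(s)`). -/
noncomputable def dStar {V : Type*} [Fintype V] (A : Matrix V V ℝ) (S : Finset V) (s : V) : ℝ :=
  ∑ v ∈ S, A s v

/-- The size `n_s` of the fiber `r⁻¹(s)`. -/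
def fibCard {V : Type*} [Fintype V] [DecidableEq V] (r : V → V) (s : V) : ℕ :=
  (Finset.univ.filter (fun v => r v = s)).card

/-- The underlying undirected graph of the induced subdigraph on the fiber `r⁻¹(s)`. -/
def fiberGraph {V : Type*} (A : Matrix V V ℝ) (r : V → V) (s : V) :
    SimpleGraph {v : V // r v = s} where
  Adj u w := u ≠ w ∧ (A u.1 w.1 = 1 ∨ A w.1 u.1 = 1)
  symm := ⟨fun _ _ h => ⟨h.1.symm, h.2.symm⟩⟩
  loopless := ⟨fun _ h => h.1 rfl⟩

/-- The principal submatrix of `A` with rows and columns indexed by `S`. -/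
def subm {V : Type*} (A : Matrix V V ℝ) (S : Finset V) :
    Matrix {v : V // v ∈ S} {v : V // v ∈ S} ℝ :=
  A.submatrix (fun x => x.1) (fun x => x.1)

/-- `c₂(G*) = trace(A*²)`, the number of closed walks of length 2 in the strong component. -/
noncomputable def c2star {V : Type*} [Fintype V] [DecidableEq V] (A : Matrix V V ℝ)
    (S : Finset V) : ℝ :=
  Matrix.trace (subm A S * subm A S)

/-- Membership in the class `𝒢_n^m`: `A` is the adjacency matrix of a digraph of order `n`
with a unique strong component on the vertex set `S` of order `m`, with a directed tree
(the fiber `r⁻¹(s)`) hung on each vertex `s ∈ S`. -/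
structure IsGnm {V : Type*} [Fintype V] [DecidableEq V] (A : Matrix V V ℝ) (S : Finset V)
    (r : V → V) (n m : ℕ) : Prop where
  zero_one : ∀ u v, A u v = 0 ∨ A u v = 1
  loopless : ∀ v, A v v = 0
  card_V : Fintype.card V = n
  card_S : S.card = m
  two_le_m : 2 ≤ m
  m_lt_n : m < n
  strong : ∀ u ∈ S, ∀ v ∈ S, Relation.ReflTransGen (fun a b => a ∈ S ∧ b ∈ S ∧ A a b = 1) u v
  r_mem : ∀ v, r v ∈ S
  r_fix : ∀ s ∈ S, r s = s
  arc_cases : ∀ u v, A u v = 1 → (u ∈ S ∧ v ∈ S) ∨ r u = r v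
  fiber_no_symm : ∀ u v, r u = r v → A u v = 1 → A v u = 0
  fiber_tree : ∀ s ∈ S, (fiberGraph A r s).IsTree

/-- Every hung tree is an in-tree with root at its vertex of `S`: inside each fiber the
root has outdegree `0` and every other vertex has outdegree `1`. -/
def InTrees {V : Type*} [Fintype V] [DecidableEq V] (A : Matrix V V ℝ) (S : Finset V)
    (r : V → V) : Prop :=
  (∀ v, v ∉ S → (∑ w ∈ Finset.univ.filter (fun w => r w = r v), A v w) = 1) ∧
  (∀ s ∈ S, (∑ w ∈ Finset.univ.filter (fun w => r w = s), A s w) = 0)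

/-- All hung trees are trivial except the one at `v`, which is an out-star with centre `v`. -/
def OutStarAt {V : Type*} [Fintype V] [DecidableEq V] (A : Matrix V V ℝ) (S : Finset V)
    (r : V → V) (v : V) : Prop :=
  (∀ s ∈ S, s ≠ v → fibCard r s = 1) ∧ (∀ u w, r u = v → A u w = 1 → u = v)

set_option linter.unusedSectionVars false
set_option maxHeartbeats 1000000

section AuxLemmas
variable {V : Type*} [Fintype V] [DecidableEq V]

/-- fiber out-degree of `v` -/
noncomputable def fOut (A : Matrix V V ℝ) (r : V → V) (v : V) : ℝ :=
  ∑ w ∈ Finset.univ.filter (fun w => r w = r v), A v w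

lemma myA_nonneg {A : Matrix V V ℝ} (h01 : ∀ u v, A u v = 0 ∨ A u v = 1) (u v : V) :
    0 ≤ A u v := by rcases h01 u v with h | h <;> simp [h]

lemma fOut_nat {A : Matrix V V ℝ} (h01 : ∀ u v, A u v = 0 ∨ A u v = 1) (r : V → V) (v : V) :
    ∃ k : ℕ, fOut A r v = k := by
  classical
  refine ⟨((Finset.univ.filter (fun w => r w = r v)).filter (fun w => A v w = 1)).card, ?_⟩
  rw [fOut, ← Finset.sum_boole]
  exact Finset.sum_congr rfl fun w _ => by rcases h01 v w with h | h <;> simp [h]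

lemma Ealpha_eq {A : Matrix V V ℝ} (hloop : ∀ v, A v v = 0) (α : ℝ) :
    Ealpha α A = α ^ 2 * ∑ v, (outdeg A v) ^ 2 + (1 - α) ^ 2 * ∑ v, ∑ w, A v w * A w v := by
  have key : ∀ v w, Aalpha α A v w * Aalpha α A w v =
      (if v = w then α ^ 2 * (outdeg A v) ^ 2 else 0) + (1 - α) ^ 2 * (A v w * A w v) := by
    intro v w
    by_cases h : v = w
    · subst h
      simp [Aalpha, Matrix.diagonal_apply_eq, hloop v]
      ring
    · simp only [Aalpha, Matrix.add_apply, Matrix.smul_apply,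
        Matrix.diagonal_apply_ne _ h, Matrix.diagonal_apply_ne _ (Ne.symm h),
        smul_eq_mul, if_neg h]
      ring
  have h0 : Ealpha α A = ∑ v, ∑ w, Aalpha α A v w * Aalpha α A w v := by
    simp [Ealpha, Matrix.trace, Matrix.mul_apply, Matrix.diag]
  rw [h0]
  calc ∑ v, ∑ w, Aalpha α A v w * Aalpha α A w v
      = ∑ v, (α ^ 2 * (outdeg A v) ^ 2 + (1 - α) ^ 2 * ∑ w, A v w * A w v) := by
        refine Finset.sum_congr rfl fun v _ => ?_
        simp only [key]
        rw [Finset.sum_add_distrib, Finset.sum_ite_eq, ← Finset.mul_sum]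
        simp
    _ = _ := by rw [Finset.sum_add_distrib, ← Finset.mul_sum, ← Finset.mul_sum]


lemma trace_sq_eq {A : Matrix V V ℝ} {S : Finset V} {r : V → V}
    (h01 : ∀ u v, A u v = 0 ∨ A u v = 1)
    (harc : ∀ u v, A u v = 1 → (u ∈ S ∧ v ∈ S) ∨ r u = r v)
    (hns : ∀ u v, r u = r v → A u v = 1 → A v u = 0) :
    ∑ v, ∑ w, A v w * A w v = c2star A S := by
  have hz : ∀ v w : V, v ∉ S ∨ w ∉ S → A v w * A w v = 0 := by
    intro v w hvw
    rcases h01 v w with h | h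
    · simp [h]
    · rcases harc v w h with ⟨h1, h2⟩ | hr
      · tauto
      · rw [hns v w hr h, mul_zero]
  have h1 : ∑ v, ∑ w, A v w * A w v = ∑ v ∈ S, ∑ w ∈ S, A v w * A w v := by
    rw [← Finset.sum_subset (Finset.subset_univ S)
      (fun v _ hv => Finset.sum_eq_zero fun w _ => hz v w (Or.inl hv))]
    exact Finset.sum_congr rfl fun v _ =>
      (Finset.sum_subset (Finset.subset_univ S) fun w _ hw => hz v w (Or.inr hw)).symm
  rw [h1]
  have h2 : c2star A S = ∑ v : {v // v ∈ S}, ∑ w : {v // v ∈ S}, A v.1 w.1 * A w.1 v.1 := by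
    simp [c2star, subm, Matrix.trace, Matrix.mul_apply, Matrix.diag, Matrix.submatrix]
  have h3 : ∀ v : V, ∑ w : {v // v ∈ S}, A v w.1 * A w.1 v = ∑ w ∈ S, A v w * A w v :=
    fun v => Finset.sum_coe_sort S (fun w => A v w * A w v)
  rw [h2]
  simp only [h3]
  exact (Finset.sum_coe_sort S (fun v => ∑ w ∈ S, A v w * A w v)).symm

lemma outdeg_decomp {A : Matrix V V ℝ} {S : Finset V} {r : V → V}
    (hloop : ∀ v, A v v = 0)
    (harc : ∀ u v, A u v = 1 → (u ∈ S ∧ v ∈ S) ∨ r u = r v)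
    (h01 : ∀ u v, A u v = 0 ∨ A u v = 1)
    (hrfix : ∀ s ∈ S, r s = s) (v : V) :
    outdeg A v = (if v ∈ S then dStar A S v else 0) + fOut A r v := by
  by_cases hv : v ∈ S
  · rw [if_pos hv]
    have hrv : r v = v := hrfix v hv
    have hzero : ∀ w ∈ Finset.univ, w ∉ S ∪ Finset.univ.filter (fun w => r w = r v) →
        A v w = 0 := by
      intro w _ hw
      rcases h01 v w with h | h
      · exact h
      · exfalso
        rcases harc v w h with ⟨_, h2⟩ | hr
        · exact hw (Finset.mem_union_left _ h2)
        · exact hw (Finset.mem_union_right _ (Finset.mem_filter.mpr ⟨Finset.mem_univ _, hr.symm⟩))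
    have hU : outdeg A v = ∑ w ∈ S ∪ Finset.univ.filter (fun w => r w = r v), A v w :=
      (Finset.sum_subset (Finset.subset_univ _) hzero).symm
    have hI : ∑ w ∈ S ∩ Finset.univ.filter (fun w => r w = r v), A v w = 0 := by
      refine Finset.sum_eq_zero fun w hw => ?_
      rcases Finset.mem_inter.mp hw with ⟨hw1, hw2⟩
      have : w = v := by
        have := (Finset.mem_filter.mp hw2).2
        rw [hrv] at this
        rw [← this, hrfix w hw1]
      rw [this]; exact hloop v
    have := Finset.sum_union_inter (s₁ := S) (s₂ := Finset.univ.filter (fun w => r w = r v))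
      (f := fun w => A v w)
    rw [hU, dStar, fOut]
    linarith [this]
  · rw [if_neg hv, zero_add, outdeg, fOut]
    refine (Finset.sum_subset (Finset.filter_subset _ _) ?_).symm
    intro w _ hw
    rcases h01 v w with h | h
    · exact h
    · exfalso
      rcases harc v w h with ⟨h1, _⟩ | hr
      · exact hv h1
      · exact hw (Finset.mem_filter.mpr ⟨Finset.mem_univ _, hr.symm⟩)


lemma fiber_arc_count {A : Matrix V V ℝ} {r : V → V} (s : V)
    (h01 : ∀ u v, A u v = 0 ∨ A u v = 1)
    (hns : ∀ u v, r u = r v → A u v = 1 → A v u = 0)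
    (hloop : ∀ v, A v v = 0)
    (htree : (fiberGraph A r s).IsTree) (hfix : r s = s) :
    ∑ v ∈ Finset.univ.filter (fun v => r v = s), ∑ w ∈ Finset.univ.filter (fun w => r w = s),
      A v w = (fibCard r s : ℝ) - 1 := by
  classical
  set G := fiberGraph A r s with hGdef
  letI : DecidableRel G.Adj := Classical.decRel _
  have hsub : ∀ f : V → ℝ, ∑ v ∈ Finset.univ.filter (fun v => r v = s), f v
      = ∑ v : {v // r v = s}, f v.1 :=
    fun f => Finset.sum_subtype _ (by simp) f
  have hdd : ∑ v ∈ Finset.univ.filter (fun v => r v = s),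
      ∑ w ∈ Finset.univ.filter (fun w => r w = s), A v w
      = ∑ u : {v // r v = s}, ∑ w : {v // r v = s}, A u.1 w.1 := by
    rw [hsub (fun v => ∑ w ∈ Finset.univ.filter (fun w => r w = s), A v w)]
    exact Finset.sum_congr rfl fun u _ => hsub (fun w => A u.1 w)
  set X : ℝ := ∑ u : {v // r v = s}, ∑ w : {v // r v = s}, A u.1 w.1 with hX
  have hpt : ∀ u w : {v // r v = s}, A u.1 w.1 + A w.1 u.1
      = if G.Adj u w then (1:ℝ) else 0 := by
    intro u w
    by_cases hadj : G.Adj u w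
    · rw [if_pos hadj]
      have hr : r u.1 = r w.1 := by rw [u.2, w.2]
      rcases hadj.2 with h | h
      · rw [h, hns u.1 w.1 hr h]; ring
      · rw [h, hns w.1 u.1 hr.symm h]; ring
    · rw [if_neg hadj]
      by_cases huw : u = w
      · subst huw; rw [hloop u.1]; ring
      · rcases h01 u.1 w.1 with h | h
        · rcases h01 w.1 u.1 with h' | h'
          · rw [h, h']; ring
          · exact absurd ⟨huw, Or.inr h'⟩ hadj
        · exact absurd ⟨huw, Or.inl h⟩ hadj
  have hdeg : ∀ u : {v // r v = s}, ∑ w : {v // r v = s},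
      (if G.Adj u w then (1:ℝ) else 0) = (G.degree u : ℝ) := by
    intro u
    rw [Finset.sum_boole]
    norm_cast
    rw [SimpleGraph.degree, SimpleGraph.neighborFinset_eq_filter]
  have h2X : X + X = ((2 * G.edgeFinset.card : ℕ) : ℝ) := by
    have hswap : X = ∑ u : {v // r v = s}, ∑ w : {v // r v = s}, A w.1 u.1 :=
      Finset.sum_comm
    calc X + X = ∑ u : {v // r v = s}, ∑ w : {v // r v = s}, (A u.1 w.1 + A w.1 u.1) := by
          nth_rewrite 2 [hswap]
          rw [hX, ← Finset.sum_add_distrib]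
          exact Finset.sum_congr rfl fun u _ => (Finset.sum_add_distrib).symm
      _ = ∑ u : {v // r v = s}, (G.degree u : ℝ) := by
          refine Finset.sum_congr rfl fun u _ => ?_
          rw [← hdeg u]
          exact Finset.sum_congr rfl fun w _ => hpt u w
      _ = ((∑ u : {v // r v = s}, G.degree u : ℕ) : ℝ) := by push_cast; ring
      _ = ((2 * G.edgeFinset.card : ℕ) : ℝ) := by
          rw [SimpleGraph.sum_degrees_eq_twice_card_edges]
  have hcardsub : Fintype.card {v // r v = s} = fibCard r s := Fintype.card_subtype _
  have hedge : G.edgeFinset.card + 1 = fibCard r s := by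
    rw [← hcardsub]; exact htree.card_edgeFinset
  have h1le : 1 ≤ fibCard r s := by
    rw [fibCard]
    exact Finset.card_pos.mpr ⟨s, Finset.mem_filter.mpr ⟨Finset.mem_univ _, hfix⟩⟩
  have : X = (G.edgeFinset.card : ℝ) := by
    have := h2X; push_cast at this; linarith
  rw [hdd, this]
  have := congrArg (fun k : ℕ => (k : ℝ)) hedge
  push_cast at this
  linarith


lemma sum_fOut {A : Matrix V V ℝ} {S : Finset V} {r : V → V}
    (h01 : ∀ u v, A u v = 0 ∨ A u v = 1)
    (hns : ∀ u v, r u = r v → A u v = 1 → A v u = 0)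
    (hloop : ∀ v, A v v = 0)
    (hrmem : ∀ v, r v ∈ S) (hrfix : ∀ s ∈ S, r s = s)
    (htree : ∀ s ∈ S, (fiberGraph A r s).IsTree) :
    ∑ v, fOut A r v = (Fintype.card V : ℝ) - S.card := by
  classical
  have h1 : ∑ v, fOut A r v
      = ∑ s ∈ S, ∑ v ∈ Finset.univ.filter (fun v => r v = s), fOut A r v :=
    (Finset.sum_fiberwise_of_maps_to (fun v _ => hrmem v) _).symm
  have h2 : ∀ s ∈ S, ∑ v ∈ Finset.univ.filter (fun v => r v = s), fOut A r v
      = (fibCard r s : ℝ) - 1 := by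
    intro s hs
    have : ∑ v ∈ Finset.univ.filter (fun v => r v = s), fOut A r v
        = ∑ v ∈ Finset.univ.filter (fun v => r v = s),
            ∑ w ∈ Finset.univ.filter (fun w => r w = s), A v w := by
      refine Finset.sum_congr rfl fun v hv => ?_
      have hv2 : r v = s := (Finset.mem_filter.mp hv).2
      simp only [fOut, hv2]
    rw [this]
    exact fiber_arc_count s h01 hns hloop (htree s hs) (hrfix s hs)
  rw [h1, Finset.sum_congr rfl h2]
  have hc : (Finset.univ : Finset V).card = ∑ s ∈ S, fibCard r s := by
    rw [Finset.card_eq_sum_card_fiberwise (fun v _ => hrmem v)]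
    rfl
  rw [Finset.sum_sub_distrib, Finset.sum_const, nsmul_eq_mul, mul_one]
  have : ∑ s ∈ S, (fibCard r s : ℝ) = ((∑ s ∈ S, fibCard r s : ℕ) : ℝ) := by push_cast; ring
  rw [this, ← hc, Finset.card_univ]


lemma dStar_ge_one {A : Matrix V V ℝ} {S : Finset V}
    (h01 : ∀ u v, A u v = 0 ∨ A u v = 1)
    (hstrong : ∀ u ∈ S, ∀ v ∈ S, Relation.ReflTransGen (fun a b => a ∈ S ∧ b ∈ S ∧ A a b = 1) u v)
    (hcard : 2 ≤ S.card) {s : V} (hs : s ∈ S) : 1 ≤ dStar A S s := by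
  obtain ⟨t, ht, hts⟩ := Finset.exists_mem_ne hcard s
  rcases (hstrong s hs t ht).cases_head with heq | ⟨c, ⟨_, hcS, hAc⟩, _⟩
  · exact absurd heq.symm hts
  · calc (1:ℝ) = A s c := hAc.symm
      _ ≤ ∑ v ∈ S, A s v := Finset.single_le_sum (fun v _ => myA_nonneg h01 s v) hcS

lemma fOut_nonneg {A : Matrix V V ℝ} (h01 : ∀ u v, A u v = 0 ∨ A u v = 1) (r : V → V) (v : V) :
    0 ≤ fOut A r v :=
  Finset.sum_nonneg fun w _ => myA_nonneg h01 v w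

end AuxLemmas

/-- For `G ∈ 𝒢_n^m`, `E_α(G) ≥ α²·Σ_{s∈S}(d*(s))² + α²(n-m) + (1-α)²·c₂(G*)`; for
`0 < α < 1` equality holds iff each hung tree is an in-tree with root its vertex of `S`. -/
theorem stmt11 {V : Type*} [Fintype V] [DecidableEq V] (A : Matrix V V ℝ) (S : Finset V)
    (r : V → V) (n m : ℕ) (hG : IsGnm A S r n m) (α : ℝ) (hα0 : 0 ≤ α) (hα1 : α < 1) :
    α ^ 2 * ∑ s ∈ S, (dStar A S s) ^ 2 + α ^ 2 * ((n : ℝ) - m) + (1 - α) ^ 2 * c2star A S ≤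
        Ealpha α A ∧
    (0 < α →
      (Ealpha α A =
          α ^ 2 * ∑ s ∈ S, (dStar A S s) ^ 2 + α ^ 2 * ((n : ℝ) - m)
            + (1 - α) ^ 2 * c2star A S ↔
        InTrees A S r)) := by
  classical
  set f : V → ℝ := fOut A r with hf
  set g : V → ℝ := fun v => if v ∈ S then dStar A S v else 0 with hg
  have hE : Ealpha α A
      = α ^ 2 * ∑ v, (g v + f v) ^ 2 + (1 - α) ^ 2 * c2star A S := by
    rw [Ealpha_eq hG.loopless, trace_sq_eq hG.zero_one hG.arc_cases hG.fiber_no_symm]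
    congr 2
    exact Finset.sum_congr rfl fun v _ => by
      rw [outdeg_decomp hG.loopless hG.arc_cases hG.zero_one hG.r_fix v]
  have hgsq : ∑ v, g v ^ 2 = ∑ s ∈ S, dStar A S s ^ 2 := by
    have : ∀ v, g v ^ 2 = if v ∈ S then dStar A S v ^ 2 else 0 := by
      intro v; rw [hg]; by_cases h : v ∈ S <;> simp [h]
    rw [Finset.sum_congr rfl fun v _ => this v, Finset.sum_ite_mem, Finset.univ_inter]
  have hsumf : ∑ v, f v = (n : ℝ) - m := by
    rw [hf, sum_fOut hG.zero_one hG.fiber_no_symm hG.loopless hG.r_mem hG.r_fix hG.fiber_tree,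
      hG.card_V, hG.card_S]
  have hfnn : ∀ v, 0 ≤ f v := fun v => fOut_nonneg hG.zero_one r v
  have hgnn : ∀ v, 0 ≤ g v := by
    intro v; rw [hg]
    by_cases h : v ∈ S
    · simpa [h, dStar] using Finset.sum_nonneg fun w _ => myA_nonneg hG.zero_one v w
    · simp [h]
  have hfsq : ∀ v, f v ≤ f v ^ 2 := by
    intro v
    obtain ⟨k, hk⟩ := fOut_nat hG.zero_one r v
    rw [hf, hk]
    have : (k : ℝ) * ((k : ℝ) - 1) ≥ 0 := by
      rcases Nat.eq_zero_or_pos k with h | h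
      · simp [h]
      · have : (1 : ℝ) ≤ k := by exact_mod_cast h
        nlinarith
    nlinarith
  set T : ℝ := ∑ v, (2 * g v * f v + (f v ^ 2 - f v)) with hT
  have hterm_nn : ∀ v, 0 ≤ 2 * g v * f v + (f v ^ 2 - f v) := by
    intro v
    have h1 : 0 ≤ 2 * g v * f v :=
      mul_nonneg (mul_nonneg (by norm_num) (hgnn v)) (hfnn v)
    nlinarith [hfsq v]
  have hTnn : 0 ≤ T := Finset.sum_nonneg fun v _ => hterm_nn v
  have hmain : Ealpha α A
      = (α ^ 2 * ∑ s ∈ S, dStar A S s ^ 2 + α ^ 2 * ((n : ℝ) - m)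
          + (1 - α) ^ 2 * c2star A S) + α ^ 2 * T := by
    have hsq : ∑ v, (g v + f v) ^ 2
        = ∑ s ∈ S, dStar A S s ^ 2 + ((n : ℝ) - m) + T := by
      have hpt : ∀ v, (g v + f v) ^ 2
          = g v ^ 2 + (2 * g v * f v + (f v ^ 2 - f v)) + f v := by intro v; ring
      rw [Finset.sum_congr rfl fun v _ => hpt v, Finset.sum_add_distrib,
        Finset.sum_add_distrib, hgsq, hsumf, ← hT]
      ring
    rw [hE, hsq]; ring
  constructor
  · have : 0 ≤ α ^ 2 * T := mul_nonneg (sq_nonneg α) hTnn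
    linarith [hmain.ge]
  · intro hα
    have hα2 : 0 < α ^ 2 := by positivity
    constructor
    · intro heq
      have hT0 : T = 0 := by
        have : α ^ 2 * T = 0 := by linarith [hmain]
        exact (mul_eq_zero.mp this).resolve_left (ne_of_gt hα2)
      have hterm0 : ∀ v ∈ Finset.univ, 2 * g v * f v + (f v ^ 2 - f v) = 0 :=
        (Finset.sum_eq_zero_iff_of_nonneg fun v _ => hterm_nn v).mp hT0
      have hfS : ∀ s ∈ S, f s = 0 := by
        intro s hs
        have ht := hterm0 s (Finset.mem_univ s)
        have h2 : 2 * g s * f s = 0 := by nlinarith [hfsq s, hgnn s, hfnn s]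
        have hg1 : (1 : ℝ) ≤ g s := by
          rw [hg]; simp only [if_pos hs]
          exact dStar_ge_one hG.zero_one hG.strong (hG.card_S ▸ hG.two_le_m) hs
        have : g s * f s = 0 := by linarith
        rcases mul_eq_zero.mp this with h | h
        · linarith
        · exact h
      have hfle1 : ∀ v, v ∉ S → f v ≤ 1 := by
        intro v hv
        have ht := hterm0 v (Finset.mem_univ v)
        have hgv : g v = 0 := by rw [hg]; simp [hv]
        have : f v ^ 2 = f v := by rw [hgv] at ht; linarith
        have : f v * (f v - 1) = 0 := by nlinarith
        rcases mul_eq_zero.mp this with h | h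
        · rw [h]; norm_num
        · linarith
      have hcompl : ∑ v ∈ Sᶜ, f v = (n : ℝ) - m := by
        have h1 : ∑ v ∈ S, f v + ∑ v ∈ Sᶜ, f v = ∑ v, f v := Finset.sum_add_sum_compl S f
        have h2 : ∑ v ∈ S, f v = 0 := Finset.sum_eq_zero fun s hs => hfS s hs
        rw [h2, zero_add] at h1
        rw [h1, hsumf]
      have hcardc : ((Sᶜ : Finset V).card : ℝ) = (n : ℝ) - m := by
        have h1 : (Sᶜ : Finset V).card = Fintype.card V - S.card := Finset.card_compl S
        have h2 : S.card ≤ Fintype.card V := Finset.card_le_univ S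
        rw [h1, Nat.cast_sub h2, hG.card_V, hG.card_S]
      have hfv1 : ∀ v ∈ Sᶜ, f v = 1 := by
        have hz : ∑ v ∈ Sᶜ, (1 - f v) = 0 := by
          rw [Finset.sum_sub_distrib, Finset.sum_const, nsmul_eq_mul, mul_one, hcompl, hcardc]
          ring
        intro v hv
        have := (Finset.sum_eq_zero_iff_of_nonneg fun w hw => by
          have := hfle1 w (Finset.mem_compl.mp hw); linarith).mp hz v hv
        linarith
      constructor
      · intro v hv
        exact hfv1 v (Finset.mem_compl.mpr hv)
      · intro s hs
        have h0 := hfS s hs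
        rw [hf, fOut] at h0
        rw [← h0]
        congr 1
        ext w
        simp [hG.r_fix s hs]
    · intro hIT
      have hT0 : T = 0 := by
        refine Finset.sum_eq_zero fun v _ => ?_
        by_cases hv : v ∈ S
        · have hfv : f v = 0 := by
            have := hIT.2 v hv
            rw [hf, fOut]
            rw [← this]
            congr 1
            ext w
            simp [hG.r_fix v hv]
          rw [hfv]; ring
        · have hgv : g v = 0 := by rw [hg]; simp [hv]
          have hfv : f v = 1 := hIT.1 v hv
          rw [hgv, hfv]; ring
      rw [hmain, hT0]; ring
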